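/- Suppose 1 ≤ k ≤ M and det(L_S) > 0 for every S ⊆ 𝒴 with |S| ≤ k. For each core c ∈ C define ρ_c = max_{u,v ∈ 𝒴_c} sqrt(L_{uu} + L_{vv} − 2L_{uv}) and d_c = min over all u ∈ 𝒴_c and all (k−1)-singular S with S ∩ 𝒴_c = ∅ of sqrt( det(L_{S∪{u}}) / det(L_S) ) (with det(L_∅) = 1). If d_c > ρ_c for every c ∈ C, then for every c ∈ C, all u, v ∈ 𝒴_c, and every (k−1)-singular S with S ∩ 𝒴_c = ∅: det(L_{S∪{u}}) / det(L_{S∪{v}}) ≤ d_c² / (d_c − ρ_c)² = 1 + (2d_c − ρ_c)ρ_c / (d_c − ρ_c)². -/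

import Mathlib

open Matrix Finset

variable {𝒴 : Type*}

/-- Principal minor of `A` indexed by the finite set `S`:
the determinant of the principal submatrix `A_S`. -/
noncomputable def pminor [DecidableEq 𝒴] (A : Matrix 𝒴 𝒴 ℝ) (S : Finset 𝒴) : ℝ :=
  (A.submatrix (fun i : S => (i : 𝒴)) (fun j : S => (j : 𝒴))).det

/-- `Y` is singular with respect to the partition whose parts are the fibers of the
core map `part` (so `𝒴_c = part⁻¹(c)`): every part contains at most one element of `Y`. -/
def IsSingular [DecidableEq 𝒴] (part : 𝒴 → 𝒴) (Y : Finset 𝒴) : Prop :=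
  ∀ c : 𝒴, (Y.filter fun y => part y = c).card ≤ 1

instance [DecidableEq 𝒴] [Fintype 𝒴] (part : 𝒴 → 𝒴) : DecidablePred (IsSingular part) :=
  fun _ => by unfold IsSingular; infer_instance

/-- The size `|𝒴_c|` of the part with core `c`. -/
def psize [Fintype 𝒴] [DecidableEq 𝒴] (part : 𝒴 → 𝒴) (c : 𝒴) : ℕ :=
  (Finset.univ.filter fun y => part y = c).card

/-- The rescaled core kernel `L̃` with entries `L̃_{c,c'} = sqrt(|𝒴_c|·|𝒴_{c'}|)·L_{c,c'}`. -/
noncomputable def coreK [Fintype 𝒴] [DecidableEq 𝒴] (L : Matrix 𝒴 𝒴 ℝ) (part : 𝒴 → 𝒴) :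
    Matrix 𝒴 𝒴 ℝ :=
  fun i j => Real.sqrt ((psize part i : ℝ) * (psize part j : ℝ)) * L i j

section Aux

variable {m : Type*} [Fintype m] [DecidableEq m]

private lemma posDef_of_det_ne_zero' {A : Matrix m m ℝ} (hA : A.PosSemidef)
    (h : A.det ≠ 0) : A.PosDef := by
  exact hA.posDef_iff_isUnit.mpr ((Matrix.isUnit_iff_isUnit_det _).2 h.isUnit)

private def insEquiv {𝒴 : Type*} [DecidableEq 𝒴] (S : Finset 𝒴) (x : 𝒴) (hx : x ∉ S) :
    (S ⊕ Unit) ≃ {y // y ∈ (insert x S : Finset 𝒴)} where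
  toFun := Sum.elim (fun s => ⟨s.1, Finset.mem_insert_of_mem s.2⟩)
    (fun _ => ⟨x, Finset.mem_insert_self x S⟩)
  invFun y := if h : (y : 𝒴) ∈ S then Sum.inl ⟨y, h⟩ else Sum.inr ()
  left_inv := by
    rintro (s | ⟨⟩)
    · simp
    · simp [hx]
  right_inv := by
    rintro ⟨y, hy⟩
    rcases Finset.mem_insert.mp hy with rfl | h
    · simp [hx]
    · simp [h]

open scoped MatrixOrder in
private lemma schur_key {𝒴 : Type*} [Fintype 𝒴] [DecidableEq 𝒴]
    {L : Matrix 𝒴 𝒴 ℝ} (hL : L.PosSemidef) (S : Finset 𝒴)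
    (hS : pminor L S ≠ 0) :
    ∃ Q : Matrix 𝒴 𝒴 ℝ, Q.PosSemidef ∧ (L - Q).PosSemidef ∧
      ∀ x ∉ S, pminor L (insert x S) = pminor L S * Q x x := by
  classical
  set A : Matrix S S ℝ := L.submatrix (fun i : S => (i : 𝒴)) (fun j : S => (j : 𝒴)) with hAdef
  have hApsd : A.PosSemidef := hL.submatrix _
  have hAdet : A.det ≠ 0 := hS
  have hApd : A.PosDef := posDef_of_det_ne_zero' hApsd hAdet
  haveI : Invertible A := A.invertibleOfIsUnitDet (hAdet.isUnit)
  have hsym : ∀ i j, L i j = L j i := by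
    intro i j
    have := congrFun (congrFun hL.1 j) i
    simpa [conjTranspose_apply] using this
  set B : Matrix S 𝒴 ℝ := L.submatrix (fun i : S => (i : 𝒴)) id with hBdef
  obtain ⟨N0, hN0⟩ := CStarAlgebra.nonneg_iff_eq_star_mul_self.mp hL.nonneg
  have hent : ∀ i j, L i j = ∑ k, N0 k i * N0 k j := by
    intro i j
    rw [hN0]
    simp [Matrix.mul_apply, star_eq_conjTranspose, conjTranspose_apply]
  set N : Matrix 𝒴 𝒴 ℝ := N0 with hNdef
  set g : (S ⊕ 𝒴) → 𝒴 := Sum.elim (fun i : S => (i : 𝒴)) id with hgdef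
  have hblocks : (fromBlocks A B Bᴴ L).PosSemidef := by
    have hfb : fromBlocks A B Bᴴ L = (N.submatrix id g)ᴴ * (N.submatrix id g) := by
      ext i j
      rcases i with i | i <;> rcases j with j | j
      · simpa [fromBlocks, hAdef, hgdef, Matrix.mul_apply, conjTranspose_apply]
          using hent i.1 j.1
      · simpa [fromBlocks, hBdef, hgdef, Matrix.mul_apply, conjTranspose_apply]
          using hent i.1 j
      · have h3 : L j.1 i = ∑ k, N k i * N k j.1 := (hsym j.1 i).trans (hent i j.1)
        simpa [fromBlocks, hBdef, hgdef, Matrix.mul_apply, conjTranspose_apply] using h3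
      · simpa [fromBlocks, hgdef, Matrix.mul_apply, conjTranspose_apply] using hent i j
    rw [hfb]
    exact posSemidef_conjTranspose_mul_self _
  have hQpsd : (L - Bᴴ * A⁻¹ * B).PosSemidef :=
    (Matrix.PosDef.fromBlocks₁₁ B L hApd).mp hblocks
  refine ⟨L - Bᴴ * A⁻¹ * B, hQpsd, ?_, ?_⟩
  · have hLL : L - (L - Bᴴ * A⁻¹ * B) = Bᴴ * A⁻¹ * B := sub_sub_cancel _ _
    rw [hLL]
    exact hApd.inv.posSemidef.conjTranspose_mul_mul_same B
  · intro x hx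
    set e := insEquiv S x hx with hedef
    have hdet1 : pminor L (insert x S) =
        ((L.submatrix (fun i : (insert x S : Finset 𝒴) => (i : 𝒴))
            (fun j : (insert x S : Finset 𝒴) => (j : 𝒴))).submatrix e e).det :=
      (Matrix.det_submatrix_equiv_self e _).symm
    have hmx : (L.submatrix (fun i : (insert x S : Finset 𝒴) => (i : 𝒴))
            (fun j : (insert x S : Finset 𝒴) => (j : 𝒴))).submatrix e e =
        fromBlocks A (Matrix.of fun s (_ : Unit) => L s x)
          (Matrix.of fun (_ : Unit) s => L x s) (Matrix.of fun _ _ => L x x) := by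
      ext i j
      rcases i with i | i <;> rcases j with j | j <;>
        simp [hedef, insEquiv, hAdef]
    rw [hdet1, hmx, Matrix.det_fromBlocks₁₁, Matrix.invOf_eq_nonsing_inv]
    have hpm : pminor L S = A.det := rfl
    rw [hpm]
    congr 1
    rw [Matrix.det_unique]
    have hcongr : ∀ s : S, (∑ t : S, L x t * A⁻¹ t s) = ∑ t : S, L t.1 x * A⁻¹ t s :=
      fun s => Finset.sum_congr rfl fun t _ => by rw [hsym x t]
    simp only [Matrix.sub_apply, Matrix.of_apply, Matrix.mul_apply, conjTranspose_apply,
      hBdef, Matrix.submatrix_apply, id, star_trivial]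
    rw [sub_right_inj]
    exact Finset.sum_congr rfl fun s _ => by rw [hcongr s]


private lemma quadform_two {m : Type*} [Fintype m] [DecidableEq m]
    {P : Matrix m m ℝ} (hP : P.PosSemidef) (u v : m) (t : ℝ) :
    0 ≤ t ^ 2 * P u u - t * P u v - t * P v u + P v v := by
  have h := hP.dotProduct_mulVec_nonneg (fun i => (if i = u then t else 0) - (if i = v then 1 else 0))
  simp only [star_trivial, dotProduct, mulVec, mul_sub, sub_mul, mul_ite, ite_mul,
    mul_zero, zero_mul, mul_one, one_mul, Finset.sum_sub_distrib,
    Finset.sum_ite_eq', Finset.mem_univ, if_true] at h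
  nlinarith [h]

end Aux

/-- Lemma 4 of the paper: with `ρ_c` the diameter of the part `𝒴_c` in feature
space and `d_c` the least distance-to-span quantity, if `d_c > ρ_c` for all cores, then the
distortion ratio `det(L_{S∪{u}})/det(L_{S∪{v}})` is at most
`d_c²/(d_c−ρ_c)² = 1 + (2d_c−ρ_c)ρ_c/(d_c−ρ_c)²`. -/
theorem distortion_factor_bound
    [Fintype 𝒴] [DecidableEq 𝒴]
    (L : Matrix 𝒴 𝒴 ℝ) (hL : L.PosSemidef)
    (part : 𝒴 → 𝒴) (C : Finset 𝒴) (M : ℕ) (hMcard : C.card = M)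
    (hmem : ∀ y, part y ∈ C) (hfix : ∀ c ∈ C, part c = c)
    (k : ℕ) (hk : 1 ≤ k) (hkM : k ≤ M)
    (hdet : ∀ S : Finset 𝒴, S.card ≤ k → 0 < pminor L S)
    (ρ d : 𝒴 → ℝ)
    (hρ : ∀ c ∈ C, IsGreatest
      {x : ℝ | ∃ u v : 𝒴, part u = c ∧ part v = c ∧
        x = Real.sqrt (L u u + L v v - 2 * L u v)} (ρ c))
    (hd : ∀ c ∈ C, IsLeast
      {x : ℝ | ∃ u : 𝒴, part u = c ∧ ∃ S : Finset 𝒴, S.card = k - 1 ∧ IsSingular part S ∧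
        (∀ s ∈ S, part s ≠ c) ∧ x = Real.sqrt (pminor L (insert u S) / pminor L S)} (d c))
    (hsep : ∀ c ∈ C, ρ c < d c) :
    ∀ c ∈ C, ∀ u v : 𝒴, part u = c → part v = c →
      ∀ S : Finset 𝒴, S.card = k - 1 → IsSingular part S → (∀ s ∈ S, part s ≠ c) →
        pminor L (insert u S) / pminor L (insert v S) ≤ d c ^ 2 / (d c - ρ c) ^ 2 ∧
          d c ^ 2 / (d c - ρ c) ^ 2 = 1 + (2 * d c - ρ c) * ρ c / (d c - ρ c) ^ 2 := by
  intro c hc u v hu hv S hScard hSsing hSc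
  have hsym : ∀ i j, L i j = L j i := fun i j => by
    have := congrFun (congrFun hL.1 j) i
    simpa [Matrix.conjTranspose_apply] using this
  have hp : 0 < pminor L S := hdet S (hScard ▸ Nat.sub_le k 1)
  obtain ⟨Q, hQ, hLQ, hQdet⟩ := schur_key hL S hp.ne'
  have huS : u ∉ S := fun h => hSc u h hu
  have hvS : v ∉ S := fun h => hSc v h hv
  have hcardu : (insert u S).card ≤ k := by
    rw [Finset.card_insert_of_notMem huS, hScard]; omega
  have hcardv : (insert v S).card ≤ k := by
    rw [Finset.card_insert_of_notMem hvS, hScard]; omega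
  have hpu : 0 < pminor L (insert u S) := hdet _ hcardu
  have hpv : 0 < pminor L (insert v S) := hdet _ hcardv
  have hQu : pminor L (insert u S) = pminor L S * Q u u := hQdet u huS
  have hQv : pminor L (insert v S) = pminor L S * Q v v := hQdet v hvS
  have ha : 0 < Q u u := by nlinarith [hpu, hp, hQu]
  have hb : 0 < Q v v := by nlinarith [hpv, hp, hQv]
  have hdc := hd c hc
  have hρc := hρ c hc
  have hsymQ : Q u v = Q v u := by
    have := congrFun (congrFun hQ.1 v) u
    simpa [Matrix.conjTranspose_apply] using this
  have hdb : d c ≤ Real.sqrt (Q v v) := by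
    have h1 : d c ≤ Real.sqrt (pminor L (insert v S) / pminor L S) :=
      hdc.2 ⟨v, hv, S, hScard, hSsing, hSc, rfl⟩
    rwa [hQv, mul_div_cancel_left₀ _ hp.ne'] at h1
  have hρ0 : 0 ≤ ρ c := by
    have h1 : Real.sqrt (L u u + L u u - 2 * L u u) ≤ ρ c :=
      hρc.2 ⟨u, u, hu, hu, rfl⟩
    rwa [show L u u + L u u - 2 * L u u = 0 by ring, Real.sqrt_zero] at h1
  have hρd : ρ c < d c := hsep c hc
  -- Cauchy–Schwarz for the Schur complement
  have hcs : Q u v ≤ Real.sqrt (Q u u) * Real.sqrt (Q v v) := by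
    have hform : ∀ t : ℝ, 0 ≤ Q u u * (t * t) + -(2 * Q u v) * t + Q v v := by
      intro t
      have h := quadform_two hQ u v t
      rw [← hsymQ] at h
      nlinarith [h]
    have hdisc := discrim_le_zero hform
    rw [discrim] at hdisc
    have h2 : Q u v ^ 2 ≤ Q u u * Q v v := by nlinarith
    calc Q u v ≤ |Q u v| := le_abs_self _
      _ = Real.sqrt (Q u v ^ 2) := (Real.sqrt_sq_eq_abs _).symm
      _ ≤ Real.sqrt (Q u u * Q v v) := Real.sqrt_le_sqrt h2
      _ = Real.sqrt (Q u u) * Real.sqrt (Q v v) := Real.sqrt_mul ha.le _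
  -- the residual distance between u and v is at most ρ c
  have hQform : Q u u + Q v v - 2 * Q u v ≤ L u u + L v v - 2 * L u v := by
    have h := quadform_two hLQ u v 1
    simp only [Matrix.sub_apply] at h
    have hsymL : L u v = L v u := hsym u v
    nlinarith [h]
  have hρbound : Real.sqrt (Q u u + Q v v - 2 * Q u v) ≤ ρ c :=
    (Real.sqrt_le_sqrt hQform).trans (hρc.2 ⟨u, v, hu, hv, rfl⟩)
  have htri : Real.sqrt (Q u u) ≤ Real.sqrt (Q v v) + ρ c := by
    have hα : Real.sqrt (Q u u) ^ 2 = Q u u := Real.sq_sqrt ha.le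
    have hβ : Real.sqrt (Q v v) ^ 2 = Q v v := Real.sq_sqrt hb.le
    have h1 : (Real.sqrt (Q u u) - Real.sqrt (Q v v)) ^ 2 ≤ Q u u + Q v v - 2 * Q u v := by
      nlinarith [hcs]
    have e1 : Real.sqrt (Q u u) - Real.sqrt (Q v v) ≤
        Real.sqrt (Q u u + Q v v - 2 * Q u v) := by
      calc Real.sqrt (Q u u) - Real.sqrt (Q v v)
          ≤ |Real.sqrt (Q u u) - Real.sqrt (Q v v)| := le_abs_self _
        _ = Real.sqrt ((Real.sqrt (Q u u) - Real.sqrt (Q v v)) ^ 2) :=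
            (Real.sqrt_sq_eq_abs _).symm
        _ ≤ Real.sqrt (Q u u + Q v v - 2 * Q u v) := Real.sqrt_le_sqrt h1
    linarith
  have hdρ : 0 < d c - ρ c := by linarith
  constructor
  · rw [hQu, hQv, mul_div_mul_left _ _ hp.ne']
    rw [div_le_div_iff₀ hb (by positivity)]
    have hα : Real.sqrt (Q u u) ^ 2 = Q u u := Real.sq_sqrt ha.le
    have hβ : Real.sqrt (Q v v) ^ 2 = Q v v := Real.sq_sqrt hb.le
    have h1 : (Real.sqrt (Q v v) + ρ c) * (d c - ρ c) ≤ d c * Real.sqrt (Q v v) := by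
      nlinarith [mul_le_mul_of_nonneg_left hdb hρ0, sq_nonneg (ρ c)]
    have h2 : Real.sqrt (Q u u) * (d c - ρ c) ≤ (Real.sqrt (Q v v) + ρ c) * (d c - ρ c) :=
      mul_le_mul_of_nonneg_right htri hdρ.le
    have h3 : 0 ≤ Real.sqrt (Q u u) * (d c - ρ c) :=
      mul_nonneg (Real.sqrt_nonneg _) hdρ.le
    calc Q u u * (d c - ρ c) ^ 2
        = (Real.sqrt (Q u u) * (d c - ρ c)) * (Real.sqrt (Q u u) * (d c - ρ c)) := by
          conv_lhs => rw [← hα]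
          ring
      _ ≤ (d c * Real.sqrt (Q v v)) * (d c * Real.sqrt (Q v v)) :=
          mul_self_le_mul_self h3 (h2.trans h1)
      _ = d c ^ 2 * Q v v := by
          conv_rhs => rw [← hβ]
          ring
  · have hne : d c - ρ c ≠ 0 := hdρ.ne'
    field_simp
    ring
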